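/- Let U ⊆ ℝ⁴ be open, let η = diag(1,−1,−1,−1), let Ψ : U → ℝ be differentiable, and let v : U → ℝ⁴ (covariant components v_μ) be differentiable with Σ_{μ,ν} η^{μν} v_μ v_ν = 1 on U, where v^μ = Σ_ν η^{μν} v_ν. Assume the acceleration is the gradient of Ψ: for all x ∈ U and all μ, Σ_ν v^ν ∂_ν v_μ = ∂_μ Ψ. Define b = e^{−2Ψ} − 1, q̂_{μν} = η_{μν} − (b/(1+b)) v_μ v_ν, and Γ̂^ε_{μν} = (1/2) Σ_α (η^{εα} + b v^ε v^α)(∂_ν q̂_{αμ} + ∂_μ q̂_{αν} − ∂_α q̂_{μν}). Then v satisfies the geodesic equation of the dragged metric q̂: for all x ∈ U and all μ, Σ_ν v^ν (∂_ν v_μ − Σ_ε Γ̂^ε_{μν} v_ε) = 0. -/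

import Mathlib

open scoped BigOperators

/-- Partial derivative with respect to the μ-th coordinate of ℝ⁴. -/
noncomputable def pd (μ : Fin 4) (f : (Fin 4 → ℝ) → ℝ) (x : Fin 4 → ℝ) : ℝ :=
  fderiv ℝ f x (Pi.single μ 1)

/-- The Minkowski metric η = diag(1,−1,−1,−1). -/
noncomputable def ηm : Matrix (Fin 4) (Fin 4) ℝ := Matrix.diagonal ![1, -1, -1, -1]

/-- Contravariant components `v^μ = η^{μν} v_ν` (note `η⁻¹ = η`). -/
noncomputable def vup (v : (Fin 4 → ℝ) → Fin 4 → ℝ) (x : Fin 4 → ℝ) (μ : Fin 4) : ℝ :=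
  ∑ ν, ηm μ ν * v x ν

/-- The covariant dragged metric `q̂_{μν} = η_{μν} − (b/(1+b)) v_μ v_ν`. -/
noncomputable def qhat (b : (Fin 4 → ℝ) → ℝ) (v : (Fin 4 → ℝ) → Fin 4 → ℝ)
    (x : Fin 4 → ℝ) (μ ν : Fin 4) : ℝ :=
  ηm μ ν - (b x / (1 + b x)) * v x μ * v x ν

/-- The Christoffel symbols of the dragged metric, computed with its contravariant form
`q̂^{εα} = η^{εα} + b v^ε v^α`. -/
noncomputable def Γhat (b : (Fin 4 → ℝ) → ℝ) (v : (Fin 4 → ℝ) → Fin 4 → ℝ)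
    (ε μ ν : Fin 4) (x : Fin 4 → ℝ) : ℝ :=
  (1 / 2) * ∑ α, (ηm ε α + b x * vup v x ε * vup v x α) *
    (pd ν (fun y => qhat b v y α μ) x + pd μ (fun y => qhat b v y α ν) x
      - pd α (fun y => qhat b v y μ ν) x)

lemma ηm_00 : ηm 0 0 = 1 := by simp [ηm]
lemma ηm_01 : ηm 0 1 = 0 := by simp [ηm]
lemma ηm_02 : ηm 0 2 = 0 := by simp [ηm]
lemma ηm_03 : ηm 0 3 = 0 := by simp [ηm]
lemma ηm_10 : ηm 1 0 = 0 := by simp [ηm]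
lemma ηm_11 : ηm 1 1 = -1 := by simp [ηm]
lemma ηm_12 : ηm 1 2 = 0 := by simp [ηm]
lemma ηm_13 : ηm 1 3 = 0 := by simp [ηm]
lemma ηm_20 : ηm 2 0 = 0 := by simp [ηm]
lemma ηm_21 : ηm 2 1 = 0 := by simp [ηm]
lemma ηm_22 : ηm 2 2 = -1 := by simp [ηm]
lemma ηm_23 : ηm 2 3 = 0 := by simp [ηm]
lemma ηm_30 : ηm 3 0 = 0 := by simp [ηm]
lemma ηm_31 : ηm 3 1 = 0 := by simp [ηm]
lemma ηm_32 : ηm 3 2 = 0 := by simp [ηm]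
lemma ηm_33 : ηm 3 3 = -1 := by simp [ηm]

lemma pd_mul {f g : (Fin 4 → ℝ) → ℝ} {x : Fin 4 → ℝ} (hf : DifferentiableAt ℝ f x)
    (hg : DifferentiableAt ℝ g x) (μ : Fin 4) :
    pd μ (fun y => f y * g y) x = pd μ f x * g x + f x * pd μ g x := by
  simp only [pd, fderiv_fun_mul hf hg, ContinuousLinearMap.add_apply,
    ContinuousLinearMap.smul_apply, smul_eq_mul]
  ring

lemma pd_sum {ι : Type*} (s : Finset ι) (f : ι → (Fin 4 → ℝ) → ℝ) {x : Fin 4 → ℝ}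
    (h : ∀ i ∈ s, DifferentiableAt ℝ (f i) x) (μ : Fin 4) :
    pd μ (fun y => ∑ i ∈ s, f i y) x = ∑ i ∈ s, pd μ (f i) x := by
  simp only [pd, fderiv_fun_sum h, ContinuousLinearMap.coe_sum', Finset.sum_apply]

lemma pd_qhat (Ψ : (Fin 4 → ℝ) → ℝ) (v : (Fin 4 → ℝ) → Fin 4 → ℝ) (x : Fin 4 → ℝ)
    (hΨ : DifferentiableAt ℝ Ψ x) (hv : ∀ β : Fin 4, DifferentiableAt ℝ (fun y => v y β) x)
    (ν α β : Fin 4) :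
    pd ν (fun y => qhat (fun y => Real.exp (-2 * Ψ y) - 1) v y α β) x
      = 2 * Real.exp (2 * Ψ x) * pd ν Ψ x * (v x α * v x β)
        + (Real.exp (2 * Ψ x) - 1) * (pd ν (fun y => v y α) x * v x β
            + v x α * pd ν (fun y => v y β) x) := by
  have hq : (fun y => qhat (fun y => Real.exp (-2 * Ψ y) - 1) v y α β)
      = fun y => ηm α β + (Real.exp (2 * Ψ y) - 1) * (v y α * v y β) := by
    funext y
    have h2 : Real.exp (2 * Ψ y) ≠ 0 := Real.exp_ne_zero _
    have hneg : Real.exp (-2 * Ψ y) = (Real.exp (2 * Ψ y))⁻¹ := by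
      rw [show (-2 : ℝ) * Ψ y = -(2 * Ψ y) by ring, Real.exp_neg]
    simp only [qhat, hneg]
    field_simp
    ring
  rw [hq]
  have h2Ψ : DifferentiableAt ℝ (fun y => 2 * Ψ y) x := hΨ.const_mul 2
  have hc : DifferentiableAt ℝ (fun y => Real.exp (2 * Ψ y) - 1) x := h2Ψ.exp.sub_const 1
  have hvv : DifferentiableAt ℝ (fun y => v y α * v y β) x := (hv α).mul (hv β)
  have e1 : pd ν (fun y => ηm α β + (Real.exp (2 * Ψ y) - 1) * (v y α * v y β)) x
      = pd ν (fun y => (Real.exp (2 * Ψ y) - 1) * (v y α * v y β)) x := by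
    simp only [pd, fderiv_const_add]
  rw [e1, pd_mul hc hvv, pd_mul (hv α) (hv β)]
  have e2 : pd ν (fun y => Real.exp (2 * Ψ y) - 1) x = Real.exp (2 * Ψ x) * (2 * pd ν Ψ x) := by
    simp only [pd]
    rw [fderiv_sub_const, fderiv_exp h2Ψ, fderiv_const_mul hΨ]
    simp [smul_eq_mul]
  rw [e2]
  ring

set_option maxHeartbeats 2000000 in
/-- Any accelerated motion in Minkowski space whose acceleration is a gradient,
`a_μ = v^ν ∂_ν v_μ = ∂_μ Ψ`, is a geodesic of the dragged metric
`q̂_{μν} = η_{μν} − (b/(1+b)) v_μ v_ν` with `1 + b = e^{−2Ψ}`. -/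
theorem accelerated_path_is_dragged_geodesic
    (U : Set (Fin 4 → ℝ)) (hUopen : IsOpen U)
    (Ψ : (Fin 4 → ℝ) → ℝ) (v : (Fin 4 → ℝ) → Fin 4 → ℝ)
    (hΨdiff : ∀ x ∈ U, DifferentiableAt ℝ Ψ x)
    (hvdiff : ∀ x ∈ U, ∀ μ : Fin 4, DifferentiableAt ℝ (fun y => v y μ) x)
    (hnorm : ∀ x ∈ U, ∑ μ, ∑ ν, ηm μ ν * v x μ * v x ν = 1)
    (haccel : ∀ x ∈ U, ∀ μ : Fin 4,
      ∑ ν, vup v x ν * pd ν (fun y => v y μ) x = pd μ Ψ x) :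
    ∀ x ∈ U, ∀ μ : Fin 4,
      ∑ ν, vup v x ν * (pd ν (fun y => v y μ) x
        - ∑ ε, Γhat (fun y => Real.exp (-2 * Ψ y) - 1) v ε μ ν x * v x ε) = 0 := by
  intro x hx μ
  have hΨx : DifferentiableAt ℝ Ψ x := hΨdiff x hx
  have hvx : ∀ β : Fin 4, DifferentiableAt ℝ (fun y => v y β) x := hvdiff x hx
  -- vup expansion lemmas
  have hvup0 : vup v x 0 = v x 0 := by simp [vup, ηm, Fin.sum_univ_four]
  have hvup1 : vup v x 1 = -v x 1 := by simp [vup, ηm, Fin.sum_univ_four]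
  have hvup2 : vup v x 2 = -v x 2 := by simp [vup, ηm, Fin.sum_univ_four]
  have hvup3 : vup v x 3 = -v x 3 := by simp [vup, ηm, Fin.sum_univ_four]
  -- normalization
  have hN : ∑ a, vup v x a * v x a = 1 := by
    have h := hnorm x hx
    simp only [Fin.sum_univ_four] at h ⊢
    simp only [hvup0, hvup1, hvup2, hvup3]
    simp [ηm, Matrix.diagonal_apply, Fin.sum_univ_four] at h
    linarith
  -- orthogonality of velocity and its derivative
  have hO : ∀ ν' : Fin 4, ∑ a, vup v x a * pd ν' (fun y => v y a) x = 0 := by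
    intro ν'
    have hd : ∀ a b : Fin 4, DifferentiableAt ℝ (fun y => ηm a b * v y a * v y b) x := by
      intro a b
      exact ((hvx a).const_mul (ηm a b)).mul (hvx b)
    have h0 : pd ν' (fun y => ∑ a, ∑ b, ηm a b * v y a * v y b) x = 0 := by
      have heq : (fun y => ∑ a, ∑ b, ηm a b * v y a * v y b) =ᶠ[nhds x] fun _ => (1 : ℝ) := by
        filter_upwards [hUopen.mem_nhds hx] with y hy using hnorm y hy
      simp [pd, heq.fderiv_eq]
    have h1 : pd ν' (fun y => ∑ a, ∑ b, ηm a b * v y a * v y b) x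
        = ∑ a, ∑ b, ηm a b * (pd ν' (fun y => v y a) x * v x b
            + v x a * pd ν' (fun y => v y b) x) := by
      rw [pd_sum _ _ (fun a _ => DifferentiableAt.fun_sum (fun b _ => hd a b)) ν']
      refine Finset.sum_congr rfl fun a _ => ?_
      rw [pd_sum _ _ (fun b _ => hd a b) ν']
      refine Finset.sum_congr rfl fun b _ => ?_
      rw [pd_mul ((hvx a).const_mul (ηm a b)) (hvx b) ν']
      have : pd ν' (fun y => ηm a b * v y a) x = ηm a b * pd ν' (fun y => v y a) x := by
        simp only [pd, fderiv_const_mul (hvx a)]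
        simp
      rw [this]
      ring
    rw [h1] at h0
    simp only [Fin.sum_univ_four] at h0 ⊢
    simp only [hvup0, hvup1, hvup2, hvup3]
    simp [ηm, Matrix.diagonal_apply] at h0
    linarith
  -- acceleration facts
  have hA : ∀ b : Fin 4, ∑ ν, vup v x ν * pd ν (fun y => v y b) x = pd b Ψ x := haccel x hx
  -- the gradient of Ψ is orthogonal to v
  have hW : ∑ a, vup v x a * pd a Ψ x = 0 := by
    rw [Fin.sum_univ_four, ← hA 0, ← hA 1, ← hA 2, ← hA 3]
    have g0 := hO 0; have g1 := hO 1; have g2 := hO 2; have g3 := hO 3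
    simp only [Fin.sum_univ_four] at g0 g1 g2 g3 ⊢
    linear_combination vup v x 0 * g0 + vup v x 1 * g1 + vup v x 2 * g2 + vup v x 3 * g3
  -- exponential fact
  have hE : (1 + (Real.exp (-2 * Ψ x) - 1)) * Real.exp (2 * Ψ x) = 1 := by
    have : Real.exp (-2 * Ψ x) * Real.exp (2 * Ψ x) = 1 := by
      rw [← Real.exp_add]
      norm_num
    linarith
  -- the contracted Christoffel symbols
  have hGT : ∀ ν : Fin 4,
      ∑ ε, Γhat (fun y => Real.exp (-2 * Ψ y) - 1) v ε μ ν x * v x ε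
        = 1 / 2 * ((1 + (Real.exp (-2 * Ψ x) - 1)) *
            (2 * Real.exp (2 * Ψ x) * pd ν Ψ x * v x μ
              + (Real.exp (2 * Ψ x) - 1) * pd ν (fun y => v y μ) x
              + 2 * Real.exp (2 * Ψ x) * pd μ Ψ x * v x ν
              + (Real.exp (2 * Ψ x) - 1) * pd μ (fun y => v y ν) x
              - (Real.exp (2 * Ψ x) - 1) * (pd μ Ψ x * v x ν + v x μ * pd ν Ψ x))) := by
    intro ν
    have hT : ∑ a, vup v x a *
        ((2 * Real.exp (2 * Ψ x) * pd ν Ψ x * (v x a * v x μ)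
            + (Real.exp (2 * Ψ x) - 1) * (pd ν (fun y => v y a) x * v x μ
                + v x a * pd ν (fun y => v y μ) x))
          + (2 * Real.exp (2 * Ψ x) * pd μ Ψ x * (v x a * v x ν)
            + (Real.exp (2 * Ψ x) - 1) * (pd μ (fun y => v y a) x * v x ν
                + v x a * pd μ (fun y => v y ν) x))
          - (2 * Real.exp (2 * Ψ x) * pd a Ψ x * (v x μ * v x ν)
            + (Real.exp (2 * Ψ x) - 1) * (pd a (fun y => v y μ) x * v x ν
                + v x μ * pd a (fun y => v y ν) x)))
        = 2 * Real.exp (2 * Ψ x) * pd ν Ψ x * v x μ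
            + (Real.exp (2 * Ψ x) - 1) * pd ν (fun y => v y μ) x
            + 2 * Real.exp (2 * Ψ x) * pd μ Ψ x * v x ν
            + (Real.exp (2 * Ψ x) - 1) * pd μ (fun y => v y ν) x
            - (Real.exp (2 * Ψ x) - 1) * (pd μ Ψ x * v x ν + v x μ * pd ν Ψ x) := by
      have hN' := hN
      have hOn := hO ν
      have hOm := hO μ
      have hW' := hW
      have hAm := hA μ
      have hAn := hA ν
      simp only [Fin.sum_univ_four, hvup0, hvup1, hvup2, hvup3] at hN' hOn hOm hW' hAm hAn ⊢
      linear_combination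
        (2 * Real.exp (2 * Ψ x) * pd ν Ψ x * v x μ
            + (Real.exp (2 * Ψ x) - 1) * pd ν (fun y => v y μ) x
            + 2 * Real.exp (2 * Ψ x) * pd μ Ψ x * v x ν
            + (Real.exp (2 * Ψ x) - 1) * pd μ (fun y => v y ν) x) * hN'
        + ((Real.exp (2 * Ψ x) - 1) * v x μ) * hOn
        + ((Real.exp (2 * Ψ x) - 1) * v x ν) * hOm
        + (-2 * Real.exp (2 * Ψ x) * v x μ * v x ν) * hW'
        + (-(Real.exp (2 * Ψ x) - 1) * v x ν) * hAm
        + (-(Real.exp (2 * Ψ x) - 1) * v x μ) * hAn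
    have hg : ∑ ε, Γhat (fun y => Real.exp (-2 * Ψ y) - 1) v ε μ ν x * v x ε
        = 1 / 2 * ((1 + (Real.exp (-2 * Ψ x) - 1) * (∑ a, vup v x a * v x a)) *
            ∑ a, vup v x a *
              ((2 * Real.exp (2 * Ψ x) * pd ν Ψ x * (v x a * v x μ)
                  + (Real.exp (2 * Ψ x) - 1) * (pd ν (fun y => v y a) x * v x μ
                      + v x a * pd ν (fun y => v y μ) x))
                + (2 * Real.exp (2 * Ψ x) * pd μ Ψ x * (v x a * v x ν)
                  + (Real.exp (2 * Ψ x) - 1) * (pd μ (fun y => v y a) x * v x ν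
                      + v x a * pd μ (fun y => v y ν) x))
                - (2 * Real.exp (2 * Ψ x) * pd a Ψ x * (v x μ * v x ν)
                  + (Real.exp (2 * Ψ x) - 1) * (pd a (fun y => v y μ) x * v x ν
                      + v x μ * pd a (fun y => v y ν) x)))) := by
      simp only [Γhat, pd_qhat Ψ v x hΨx hvx]
      simp only [Fin.sum_univ_four, hvup0, hvup1, hvup2, hvup3,
        ηm_00, ηm_01, ηm_02, ηm_03, ηm_10, ηm_11, ηm_12, ηm_13,
        ηm_20, ηm_21, ηm_22, ηm_23, ηm_30, ηm_31, ηm_32, ηm_33]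
      ring
    rw [hg, hN, mul_one, hT]
  -- finish
  simp only [mul_sub, Finset.sum_sub_distrib]
  rw [haccel x hx μ]
  simp only [hGT]
  have hN' := hN
  have hOm := hO μ
  have hW' := hW
  have hAm := hA μ
  simp only [Fin.sum_univ_four, hvup0, hvup1, hvup2, hvup3] at hN' hOm hW' hAm ⊢
  linear_combination
    (-(1 / 2) * (1 + (Real.exp (-2 * Ψ x) - 1)) * (Real.exp (2 * Ψ x) - 1)) * hAm
    + (-(1 / 2) * (1 + (Real.exp (-2 * Ψ x) - 1)) * (Real.exp (2 * Ψ x) + 1) * v x μ) * hW'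
    + (-(1 / 2) * (1 + (Real.exp (-2 * Ψ x) - 1)) * (Real.exp (2 * Ψ x) + 1) * pd μ Ψ x) * hN'
    + (-(1 / 2) * (1 + (Real.exp (-2 * Ψ x) - 1)) * (Real.exp (2 * Ψ x) - 1)) * hOm
    + (-pd μ Ψ x) * hE
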